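/- For metrics g = ds² + sinh²(s) h_s with h_s = h₀ + (2^n/n) e^{−ns} h + o(e^{−ns}) as s → ∞ (h₀ the round metric on 𝕊^{n−1}, h a symmetric 2-tensor), the mean curvature of the coordinate sphere S_s satisfies Θ_{S_s} = (n−1) coth(s) − 2^{n−1} e^{−ns} μ_{h₀} + o(e^{−ns}), where μ_{h₀} = tr_{h₀} h. In particular, for n ≥ 3, Θ_{S_s} = (n−1)(1 + 2e^{−2s}) + O(e^{−3s}) > n−1 for all large s, regardless of the sign of μ_{h₀}. -/

import Mathlib

open Real Matrix Filter Asymptotics Topology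

noncomputable section

/-- The mean curvature of the coordinate sphere `S_s` in the metric
`g = ds² + sinh²(s) h_s`:  `Θ_{S_s} = (n-1) coth(s) + (1/2) tr_{h_s}(∂_s h_s)`. -/
def sphereMeanCurv (n : ℕ) (hs hs' : ℝ → Matrix (Fin (n - 1)) (Fin (n - 1)) ℝ)
    (s : ℝ) : ℝ :=
  ((n : ℝ) - 1) * Real.cosh s / Real.sinh s
    + (1 / 2) * Matrix.trace ((hs s)⁻¹ * hs' s)

/-- Key identity: `coth s - (1 + 2 e^{-2s}) = e^{-3s} / sinh s` for `s > 0`. -/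
theorem coth_sub_identity (s : ℝ) (hs0 : 0 < s) :
    Real.cosh s / Real.sinh s - (1 + 2 * Real.exp (-2*s)) = Real.exp (-3*s) / Real.sinh s := by
  have hsp : 0 < Real.sinh s := Real.sinh_pos_iff.mpr hs0
  rw [Real.sinh_eq] at hsp ⊢
  rw [Real.cosh_eq]
  rw [show (-2:ℝ)*s = -s + -s by ring, show (-3:ℝ)*s = -s + (-s + -s) by ring]
  simp only [Real.exp_add]
  have hab : Real.exp s * Real.exp (-s) = 1 := by rw [← Real.exp_add]; simp
  set a := Real.exp s
  set b := Real.exp (-s)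
  have hne : a - b ≠ 0 := by intro h; rw [h] at hsp; simp at hsp
  field_simp
  linear_combination (-2*b) * hab

/-- For metrics `g = ds² + sinh²(s) h_s` with
`h_s = h₀ + (2ⁿ/n) e^{-ns} h + o(e^{-ns})` (and correspondingly
`∂_s h_s = -2ⁿ e^{-ns} h + o(e^{-ns})`), the mean curvature of the coordinate
sphere `S_s` satisfies `Θ_{S_s} = (n-1)coth(s) - 2^{n-1} e^{-ns} μ_{h₀} + o(e^{-ns})`
with `μ_{h₀} = tr_{h₀} h`; in particular for `n ≥ 3`,
`Θ_{S_s} = (n-1)(1 + 2e^{-2s}) + O(e^{-3s})`, which is `> n-1` for all large `s`,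
regardless of the sign of `μ_{h₀}`. -/
theorem sphereMeanCurv_asymptotics (n : ℕ) (hn : 3 ≤ n)
    (h₀ H : Matrix (Fin (n - 1)) (Fin (n - 1)) ℝ) (hh₀ : IsUnit h₀.det)
    (hs hs' : ℝ → Matrix (Fin (n - 1)) (Fin (n - 1)) ℝ)
    (hderiv : ∀ (s : ℝ) (i j : Fin (n - 1)),
      HasDerivAt (fun t => hs t i j) (hs' s i j) s)
    (hunit : ∀ᶠ s in atTop, IsUnit (hs s).det)
    (hexp : ∀ i j : Fin (n - 1),
      (fun s => hs s i j - (h₀ i j + (2 ^ n / (n : ℝ)) * Real.exp (-(n : ℝ) * s) * H i j))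
        =o[atTop] fun s => Real.exp (-(n : ℝ) * s))
    (hexp' : ∀ i j : Fin (n - 1),
      (fun s => hs' s i j + 2 ^ n * Real.exp (-(n : ℝ) * s) * H i j)
        =o[atTop] fun s => Real.exp (-(n : ℝ) * s)) :
    ((fun s => sphereMeanCurv n hs hs' s
        - (((n : ℝ) - 1) * Real.cosh s / Real.sinh s
            - 2 ^ (n - 1) * Real.exp (-(n : ℝ) * s) * Matrix.trace (h₀⁻¹ * H)))
      =o[atTop] fun s => Real.exp (-(n : ℝ) * s))
    ∧ ((fun s => sphereMeanCurv n hs hs' s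
          - ((n : ℝ) - 1) * (1 + 2 * Real.exp (-2 * s)))
        =O[atTop] fun s => Real.exp (-3 * s))
    ∧ (∀ᶠ s in atTop, (n : ℝ) - 1 < sphereMeanCurv n hs hs' s) := by
  have hn0 : (0:ℝ) < n := by positivity
  have hn3 : (3:ℝ) ≤ n := by exact_mod_cast hn
  set E : ℝ → ℝ := fun s => Real.exp (-(n:ℝ) * s) with hE
  -- E → 0 at atTop
  have hEtend : Tendsto E atTop (𝓝 0) := by
    have h1 : Tendsto (fun s : ℝ => -(n:ℝ) * s) atTop atBot :=
      tendsto_id.const_mul_atTop_of_neg (by linarith)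
    exact Real.tendsto_exp_atBot.comp h1
  -- entrywise convergence of hs to h₀
  have htends : ∀ i j, Tendsto (fun s => hs s i j) atTop (𝓝 (h₀ i j)) := by
    intro i j
    have h1 : Tendsto (fun s => hs s i j
        - (h₀ i j + (2 ^ n / (n : ℝ)) * E s * H i j)) atTop (𝓝 0) :=
      (hexp i j).isBigO.trans_tendsto hEtend
    have h2 : Tendsto (fun s => h₀ i j + (2 ^ n / (n : ℝ)) * E s * H i j) atTop
        (𝓝 (h₀ i j + (2 ^ n / (n : ℝ)) * 0 * H i j)) :=
      tendsto_const_nhds.add ((tendsto_const_nhds.mul hEtend).mul tendsto_const_nhds)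
    have := h1.add h2
    simpa using this
  have htendM : Tendsto hs atTop (𝓝 h₀) := by
    apply tendsto_pi_nhds.mpr; intro i
    rw [tendsto_pi_nhds]; intro j
    exact htends i j
  -- convergence of the inverse
  have hinvM : Tendsto (fun s => (hs s)⁻¹) atTop (𝓝 h₀⁻¹) := by
    have hc : ContinuousAt Inv.inv h₀ := by
      apply continuousAt_matrix_inv
      rw [Ring.inverse_eq_inv']
      exact continuousAt_inv₀ hh₀.ne_zero
    exact hc.tendsto.comp htendM
  have hinvE : ∀ i k, Tendsto (fun s => (hs s)⁻¹ i k) atTop (𝓝 (h₀⁻¹ i k)) := by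
    intro i k
    exact (((continuous_apply k).comp (continuous_apply i)).tendsto _).comp hinvM
  -- entrywise O bound for hs'
  have hB : ∀ k i, (fun s => hs' s k i) =O[atTop] E := by
    intro k i
    have h2 : (fun s => (2:ℝ) ^ n * E s * H k i) =O[atTop] E :=
      ((isBigO_refl E atTop).const_mul_left ((2:ℝ) ^ n * H k i)).congr_left
        (fun s => by ring)
    exact ((hexp' k i).isBigO.sub h2).congr_left (fun s => by ring)
  -- key entrywise littleO
  have key : ∀ i k : Fin (n-1),
      (fun s => (hs s)⁻¹ i k * hs' s k i + 2 ^ n * E s * (h₀⁻¹ i k * H k i))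
        =o[atTop] E := by
    intro i k
    have h1 : (fun s => ((hs s)⁻¹ i k - h₀⁻¹ i k) * hs' s k i) =o[atTop] E := by
      have ha : (fun s => (hs s)⁻¹ i k - h₀⁻¹ i k) =o[atTop] (fun _ : ℝ => (1:ℝ)) := by
        rw [isLittleO_one_iff]
        have ha' : Tendsto (fun s => (hs s)⁻¹ i k - h₀⁻¹ i k) atTop
            (𝓝 (h₀⁻¹ i k - h₀⁻¹ i k)) := (hinvE i k).sub tendsto_const_nhds
        simpa using ha'
      have := ha.mul_isBigO (hB k i)
      simpa using this
    have h2 : (fun s => h₀⁻¹ i k * (hs' s k i + 2 ^ n * E s * H k i)) =o[atTop] E :=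
      (hexp' k i).const_mul_left _
    exact (h1.add h2).congr_left (fun s => by ring)
  -- sum it up to traces
  have hKey : (fun s => Matrix.trace ((hs s)⁻¹ * hs' s)
      + 2 ^ n * E s * Matrix.trace (h₀⁻¹ * H)) =o[atTop] E := by
    have hsum : (fun s => ∑ i : Fin (n-1), ∑ k : Fin (n-1),
        ((hs s)⁻¹ i k * hs' s k i + 2 ^ n * E s * (h₀⁻¹ i k * H k i))) =o[atTop] E :=
      by
        refine (IsLittleO.sum fun i (_ : i ∈ Finset.univ) => IsLittleO.sum fun k (_ : k ∈ Finset.univ) => key i k).congr_left fun s => ?_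
        simp only [Finset.sum_apply]
    refine hsum.congr_left fun s => ?_
    simp only [Matrix.trace, Matrix.diag, Matrix.mul_apply, Finset.sum_add_distrib,
      Finset.mul_sum]
  have h2pow : (2:ℝ) ^ n = 2 * 2 ^ (n - 1) := by
    rw [← pow_succ']; congr 1; omega
  -- Part 1
  have part1 : (fun s => sphereMeanCurv n hs hs' s
      - (((n : ℝ) - 1) * Real.cosh s / Real.sinh s
          - 2 ^ (n - 1) * E s * Matrix.trace (h₀⁻¹ * H))) =o[atTop] E := by
    refine ((hKey.const_mul_left (1/2)).congr_left fun s => ?_)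
    simp only [sphereMeanCurv]
    rw [h2pow]; ring
  -- the (1/2)·trace term is O(e^{-3s})
  have hEO3 : E =O[atTop] (fun s => Real.exp (-3 * s)) := by
    apply IsBigO.of_bound 1
    filter_upwards [eventually_ge_atTop (0:ℝ)] with s hs0
    have h1 : -(n:ℝ) * s ≤ -3 * s := by nlinarith
    simp only [Real.norm_eq_abs, abs_of_pos (Real.exp_pos _), one_mul, hE]
    exact Real.exp_le_exp.mpr h1
  have htrO : (fun s => (1/2) * Matrix.trace ((hs s)⁻¹ * hs' s))
      =O[atTop] (fun s => Real.exp (-3 * s)) := by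
    have h1 : (fun s => (1/2) * Matrix.trace ((hs s)⁻¹ * hs' s)) =O[atTop] E := by
      have h2 : (fun s => (2:ℝ) ^ n * E s * Matrix.trace (h₀⁻¹ * H)) =O[atTop] E :=
        ((isBigO_refl E atTop).const_mul_left ((2:ℝ) ^ n * Matrix.trace (h₀⁻¹ * H))).congr_left
          (fun s => by ring)
      exact ((hKey.isBigO.sub h2).congr_left (fun s => by ring)).const_mul_left (1/2)
    exact h1.trans hEO3
  -- coth term estimate
  have hcothO : (fun s => ((n:ℝ) - 1) * (Real.cosh s / Real.sinh s - (1 + 2 * Real.exp (-2*s))))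
      =O[atTop] (fun s => Real.exp (-3 * s)) := by
    refine IsBigO.const_mul_left ?_ _
    apply IsBigO.of_bound 1
    filter_upwards [eventually_ge_atTop (1:ℝ)] with s hs1
    have hs0 : (0:ℝ) < s := lt_of_lt_of_le one_pos hs1
    have hsinh1 : 1 ≤ Real.sinh s := le_trans hs1 (Real.self_lt_sinh_iff.mpr hs0).le
    rw [coth_sub_identity s hs0]
    simp only [Real.norm_eq_abs, one_mul, abs_of_pos (Real.exp_pos _),
      abs_of_pos (div_pos (Real.exp_pos _) (lt_of_lt_of_le one_pos hsinh1))]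
    exact div_le_self (Real.exp_pos _).le hsinh1
  -- Part 2
  have part2 : (fun s => sphereMeanCurv n hs hs' s
      - ((n : ℝ) - 1) * (1 + 2 * Real.exp (-2 * s)))
      =O[atTop] (fun s => Real.exp (-3 * s)) := by
    refine (hcothO.add htrO).congr_left fun s => ?_
    simp only [sphereMeanCurv]
    ring
  refine ⟨part1, part2, ?_⟩
  -- Part 3
  obtain ⟨c, hc⟩ := isBigO_iff.mp part2
  have hlim : Tendsto (fun s : ℝ => c * Real.exp (-s)) atTop (𝓝 0) := by
    have := (Real.tendsto_exp_atBot.comp tendsto_neg_atTop_atBot).const_mul c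
    simpa using this
  have hev : ∀ᶠ s : ℝ in atTop, c * Real.exp (-s) < 2 * ((n:ℝ) - 1) := by
    have hpos : (0:ℝ) < 2 * ((n:ℝ) - 1) := by nlinarith
    exact hlim.eventually (tendsto_id.eventually_lt_const hpos) |>.mono (fun _ h => h)
  filter_upwards [hc, hev] with s h1 h2
  have e1 : Real.exp (-3 * s) = Real.exp (-2 * s) * Real.exp (-s) := by
    rw [← Real.exp_add]; ring_nf
  have h3 : |sphereMeanCurv n hs hs' s - ((n : ℝ) - 1) * (1 + 2 * Real.exp (-2 * s))|
      ≤ c * Real.exp (-3 * s) := by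
    simpa [Real.norm_eq_abs, abs_of_pos (Real.exp_pos _)] using h1
  rw [e1] at h3
  have h4 := abs_le.mp h3
  have h5 : 0 < Real.exp (-2 * s) := Real.exp_pos _
  nlinarith [h4.1, mul_lt_mul_of_pos_left h2 h5]
end
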